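/- For all real numbers γ, β ≥ 0, the quantity H(γ, β, n) := g(β, n)·A(γ, n) + Q(γ, n) (the deterministic core of the transport-complexity lower bound for social-broadcast) satisfies: if γ > 2, H = Θ(n) for β > 2, Θ(n·log n) for β = 2, Θ(n^{2−β/2}) for 1 < β < 2, Θ(n^{3/2}/√(log n)) for β = 1, Θ(n^{3/2}) for 0 ≤ β < 1; if γ = 2, H = Θ(n·log n) for β ≥ 2, Θ(n^{2−β/2}) for 1 < β < 2, Θ(n^{3/2}/√(log n)) for β = 1, Θ(n^{3/2}) for 0 ≤ β < 1; if 3/2 < γ < 2, H = Θ(n^{3−γ}) for β ≥ 2γ−2, Θ(n^{2−β/2}) for 1 < β < 2γ−2, Θ(n^{3/2}/√(log n)) for β = 1, Θ(n^{3/2}) for 0 ≤ β < 1; if γ = 3/2, H = Θ(n^{3/2}) for β > 1, Θ(n^{3/2}·√(log n)) for β = 1, Θ(n^{3/2}·log n) for 0 ≤ β < 1; if 1 < γ < 3/2, H = Θ(n^{3−γ}) for all β ≥ 0; if γ = 1, H = Θ(n²/log n) for all β ≥ 0; and if 0 ≤ γ < 1, H = Θ(n²) for all β ≥ 0. -/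

import Mathlib

/-- `f(n) = Θ(h(n))`: there exist constants `0 < c₁ ≤ c₂` and `N₀` such that
`c₁·h(n) ≤ f(n) ≤ c₂·h(n)` for all integers `n ≥ N₀`. -/
def IsBigTheta (f h : ℕ → ℝ) : Prop :=
  ∃ c₁ c₂ : ℝ, 0 < c₁ ∧ c₁ ≤ c₂ ∧ ∃ N₀ : ℕ, ∀ n : ℕ, N₀ ≤ n →
    c₁ * h n ≤ f n ∧ f n ≤ c₂ * h n

/-- Zipf normalization `Z(γ, n) = Σ_{j=1}^{n−1} j^{−γ}`. -/
noncomputable def Z (γ : ℝ) (n : ℕ) : ℝ := ∑ j ∈ Finset.Icc 1 (n - 1), (j : ℝ) ^ (-γ)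

/-- `Q(γ, n) = n·Z(γ, n)⁻¹·Σ_{l=1}^{n−1} l^{1−γ}`. -/
noncomputable def Q (γ : ℝ) (n : ℕ) : ℝ :=
  n * (Z γ n)⁻¹ * ∑ l ∈ Finset.Icc 1 (n - 1), (l : ℝ) ^ (1 - γ)

/-- `A(γ, n) = n·Z(γ, n)⁻¹·Σ_{l=1}^{n−1} l^{1/2−γ}`. -/
noncomputable def A (γ : ℝ) (n : ℕ) : ℝ :=
  n * (Z γ n)⁻¹ * ∑ l ∈ Finset.Icc 1 (n - 1), (l : ℝ) ^ (1 / 2 - γ)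

/-- `g(β, n)`: `1` if `β > 2`; `log n` if `β = 2`; `n^{1−β/2}` if `1 < β < 2`;
`√(n/log n)` if `β = 1`; `√n` if `0 ≤ β < 1`. -/
noncomputable def g (β : ℝ) (n : ℕ) : ℝ :=
  if 2 < β then 1
  else if β = 2 then Real.log n
  else if 1 < β then (n : ℝ) ^ (1 - β / 2)
  else if β = 1 then Real.sqrt ((n : ℝ) / Real.log n)
  else Real.sqrt n

/-- `H(γ, β, n) = g(β, n)·A(γ, n) + Q(γ, n)`, the deterministic core of the
transport-complexity lower bound for social-broadcast. -/
noncomputable def H (γ β : ℝ) (n : ℕ) : ℝ := g β n * A γ n + Q γ n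

namespace SBaux


/-- Strengthened Θ with eventual positivity of the model. -/
def ThP (f h : ℕ → ℝ) : Prop :=
  ∃ c₁ c₂ : ℝ, 0 < c₁ ∧ 0 < c₂ ∧ ∃ N : ℕ, ∀ n, N ≤ n →
    0 < h n ∧ c₁ * h n ≤ f n ∧ f n ≤ c₂ * h n

theorem ThP.isBigTheta {f h : ℕ → ℝ} (H : ThP f h) : IsBigTheta f h := by
  obtain ⟨c₁, c₂, hc₁, hc₂, N, hN⟩ := H
  refine ⟨min c₁ c₂, max c₁ c₂, lt_min hc₁ hc₂, (min_le_left _ _).trans (le_max_left _ _), N,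
    fun n hn => ?_⟩
  obtain ⟨hh, h1, h2⟩ := hN n hn
  constructor
  · exact le_trans (by nlinarith [min_le_left c₁ c₂]) h1
  · exact h2.trans (by nlinarith [le_max_right c₁ c₂])

theorem ThP.pos {f h : ℕ → ℝ} (H : ThP f h) : ∃ N, ∀ n, N ≤ n → 0 < f n ∧ 0 < h n := by
  obtain ⟨c₁, c₂, hc₁, hc₂, N, hN⟩ := H
  exact ⟨N, fun n hn => ⟨lt_of_lt_of_le (by nlinarith [(hN n hn).1]) (hN n hn).2.1, (hN n hn).1⟩⟩

theorem ThP.mul {f h f' h' : ℕ → ℝ} (H : ThP f h) (H' : ThP f' h') :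
    ThP (fun n => f n * f' n) (fun n => h n * h' n) := by
  obtain ⟨c₁, c₂, hc₁, hc₂, N, hN⟩ := H
  obtain ⟨d₁, d₂, hd₁, hd₂, M, hM⟩ := H'
  refine ⟨c₁ * d₁, c₂ * d₂, by positivity, by positivity, max N M, fun n hn => ?_⟩
  obtain ⟨hh, h1, h2⟩ := hN n (le_trans (le_max_left _ _) hn)
  obtain ⟨hh', h1', h2'⟩ := hM n (le_trans (le_max_right _ _) hn)
  have hf : 0 < f n := lt_of_lt_of_le (by positivity) h1
  have hf' : 0 < f' n := lt_of_lt_of_le (by positivity) h1'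
  refine ⟨by positivity, ?_, ?_⟩
  · calc c₁ * d₁ * (h n * h' n) = (c₁ * h n) * (d₁ * h' n) := by ring
      _ ≤ f n * f' n := mul_le_mul h1 h1' (by positivity) hf.le
  · calc f n * f' n ≤ (c₂ * h n) * (d₂ * h' n) := mul_le_mul h2 h2' hf'.le (by positivity)
      _ = c₂ * d₂ * (h n * h' n) := by ring

theorem ThP.inv {f h : ℕ → ℝ} (H : ThP f h) :
    ThP (fun n => (f n)⁻¹) (fun n => (h n)⁻¹) := by
  obtain ⟨c₁, c₂, hc₁, hc₂, N, hN⟩ := H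
  refine ⟨c₂⁻¹, c₁⁻¹, by positivity, by positivity, N, fun n hn => ?_⟩
  obtain ⟨hh, h1, h2⟩ := hN n hn
  have hf : 0 < f n := lt_of_lt_of_le (by positivity) h1
  refine ⟨by positivity, ?_, ?_⟩
  · rw [show c₂⁻¹ * (h n)⁻¹ = (c₂ * h n)⁻¹ by rw [mul_inv]]
    exact inv_anti₀ hf h2
  · rw [show c₁⁻¹ * (h n)⁻¹ = (c₁ * h n)⁻¹ by rw [mul_inv]]
    exact inv_anti₀ (by positivity) h1

theorem ThP.trans {f h t : ℕ → ℝ} (H : ThP f h) (H' : ThP h t) : ThP f t := by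
  obtain ⟨c₁, c₂, hc₁, hc₂, N, hN⟩ := H
  obtain ⟨d₁, d₂, hd₁, hd₂, M, hM⟩ := H'
  refine ⟨c₁ * d₁, c₂ * d₂, by positivity, by positivity, max N M, fun n hn => ?_⟩
  obtain ⟨hh, h1, h2⟩ := hN n (le_trans (le_max_left _ _) hn)
  obtain ⟨ht, h1', h2'⟩ := hM n (le_trans (le_max_right _ _) hn)
  refine ⟨ht, ?_, ?_⟩
  · calc c₁ * d₁ * t n = c₁ * (d₁ * t n) := by ring
      _ ≤ c₁ * h n := by nlinarith
      _ ≤ f n := h1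
  · calc f n ≤ c₂ * h n := h2
      _ ≤ c₂ * (d₂ * t n) := by nlinarith
      _ = c₂ * d₂ * t n := by ring

theorem ThP.congr {f f' h : ℕ → ℝ} (H : ThP f' h) (N' : ℕ)
    (he : ∀ n, N' ≤ n → f n = f' n) : ThP f h := by
  obtain ⟨c₁, c₂, hc₁, hc₂, N, hN⟩ := H
  exact ⟨c₁, c₂, hc₁, hc₂, max N N', fun n hn => by
    rw [he n (le_trans (le_max_right _ _) hn)]
    exact hN n (le_trans (le_max_left _ _) hn)⟩

theorem ThP.congr_h {f h h' : ℕ → ℝ} (H : ThP f h) (N' : ℕ)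
    (he : ∀ n, N' ≤ n → h n = h' n) : ThP f h' := by
  obtain ⟨c₁, c₂, hc₁, hc₂, N, hN⟩ := H
  exact ⟨c₁, c₂, hc₁, hc₂, max N N', fun n hn => by
    rw [← he n (le_trans (le_max_right _ _) hn)]
    exact hN n (le_trans (le_max_left _ _) hn)⟩

theorem thP_of_eq {f h : ℕ → ℝ} (N : ℕ) (he : ∀ n, N ≤ n → f n = h n ∧ 0 < h n) :
    ThP f h :=
  ⟨1, 1, one_pos, one_pos, N, fun n hn =>
    ⟨(he n hn).2, by rw [one_mul, (he n hn).1], by rw [one_mul, (he n hn).1]⟩⟩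

theorem thP_self {h : ℕ → ℝ} (N : ℕ) (hp : ∀ n, N ≤ n → 0 < h n) : ThP h h :=
  thP_of_eq N (fun n hn => ⟨rfl, hp n hn⟩)

/-- `f₁ ~ t` dominant, `f₂ = Θ(h₂)` with `h₂ = O(t)`: the sum is `Θ(t)`. -/
theorem ThP.add_left {f₁ f₂ t h₂ : ℕ → ℝ} (H1 : ThP f₁ t) (H2 : ThP f₂ h₂)
    (C : ℝ) (M : ℕ) (hb : ∀ n, M ≤ n → h₂ n ≤ C * t n) :
    ThP (fun n => f₁ n + f₂ n) t := by
  obtain ⟨c₁, c₂, hc₁, hc₂, N, hN⟩ := H1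
  obtain ⟨d₁, d₂, hd₁, hd₂, N', hN'⟩ := H2
  refine ⟨c₁, c₂ + d₂ * max C 0, hc₁, by positivity, max (max N N') M, fun n hn => ?_⟩
  obtain ⟨ht, h1, h2⟩ := hN n (le_trans ((le_max_left _ _).trans (le_max_left _ _)) hn)
  obtain ⟨hh2, h1', h2'⟩ := hN' n (le_trans ((le_max_right _ _).trans (le_max_left _ _)) hn)
  have hbn := hb n (le_trans (le_max_right _ _) hn)
  have hf2 : 0 < f₂ n := lt_of_lt_of_le (by positivity) h1'
  have hb2 : h₂ n ≤ max C 0 * t n := hbn.trans (by nlinarith [le_max_left C 0])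
  refine ⟨ht, ?_, ?_⟩
  · show c₁ * t n ≤ f₁ n + f₂ n
    nlinarith
  · show f₁ n + f₂ n ≤ (c₂ + d₂ * max C 0) * t n
    nlinarith

theorem ThP.add_right {f₁ f₂ t h₁ : ℕ → ℝ} (H2 : ThP f₂ t) (H1 : ThP f₁ h₁)
    (C : ℝ) (M : ℕ) (hb : ∀ n, M ≤ n → h₁ n ≤ C * t n) :
    ThP (fun n => f₁ n + f₂ n) t := by
  have := (H2.add_left H1 C M hb).congr 0 (fun n _ => add_comm (f₁ n) (f₂ n))
  exact this




open Finset

noncomputable def T (α : ℝ) (m : ℕ) : ℝ := ∑ l ∈ Finset.Icc 1 m, (l : ℝ) ^ α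

lemma T_reindex (α : ℝ) (m : ℕ) :
    T α m = ∑ i ∈ Finset.Ico 0 m, ((i + 1 : ℕ) : ℝ) ^ α := by
  rw [T, ← Finset.Ico_add_one_right_eq_Icc, Finset.sum_Ico_eq_sum_range, Finset.sum_Ico_eq_sum_range]
  simp [add_comm]

lemma T_reindex' (α : ℝ) (m : ℕ) (hm : 1 ≤ m) :
    T α m = 1 + ∑ i ∈ Finset.Ico 1 m, ((i + 1 : ℕ) : ℝ) ^ α := by
  rw [T, ← Finset.Ico_add_one_right_eq_Icc, Finset.sum_eq_sum_Ico_succ_bot (by omega), Nat.cast_one,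
    Real.one_rpow, Finset.sum_Ico_eq_sum_range, Finset.sum_Ico_eq_sum_range]
  congr 1
  rw [show m + 1 - 2 = m - 1 from by omega]
  apply Finset.sum_congr rfl
  intro i _
  congr 1
  push_cast
  ring

lemma T_nonneg (α : ℝ) (m : ℕ) : 0 ≤ T α m :=
  Finset.sum_nonneg fun l _ => Real.rpow_nonneg (Nat.cast_nonneg l) α

/-- upper bound for nonnegative exponents: `T α m ≤ m^(α+1)` -/
lemma T_upper_pow {α : ℝ} (hα : 0 ≤ α) (m : ℕ) : T α m ≤ (m : ℝ) ^ (α + 1) := by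
  rcases Nat.eq_zero_or_pos m with rfl | hm
  · simp [T, Real.zero_rpow (by positivity : α + 1 ≠ 0)]
  calc T α m ≤ ∑ _l ∈ Finset.Icc 1 m, (m : ℝ) ^ α := by
        apply Finset.sum_le_sum
        intro l hl
        exact Real.rpow_le_rpow (Nat.cast_nonneg l)
          (Nat.cast_le.2 (Finset.mem_Icc.1 hl).2) hα
    _ = (m : ℝ) * (m : ℝ) ^ α := by
        rw [Finset.sum_const, Nat.card_Icc]
        simp [nsmul_eq_mul]
    _ = (m : ℝ) ^ (α + 1) := by
        rw [Real.rpow_add_one (by positivity : (m:ℝ) ≠ 0)]; ring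

/-- lower bound for nonpositive exponents: `m^(α+1) ≤ T α m` -/
lemma T_lower_pow {α : ℝ} (hα : α ≤ 0) (m : ℕ) (hm : 1 ≤ m) :
    (m : ℝ) ^ (α + 1) ≤ T α m := by
  have hm' : (0:ℝ) < m := by exact_mod_cast hm
  calc (m : ℝ) ^ (α + 1) = (m : ℝ) * (m : ℝ) ^ α := by
        rw [Real.rpow_add_one (by positivity : (m:ℝ) ≠ 0)]; ring
    _ = ∑ _l ∈ Finset.Icc 1 m, (m : ℝ) ^ α := by
        rw [Finset.sum_const, Nat.card_Icc]; simp [nsmul_eq_mul]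
    _ ≤ T α m := by
        apply Finset.sum_le_sum
        intro l hl
        have hl1 : (1:ℝ) ≤ (l:ℝ) := by exact_mod_cast (Finset.mem_Icc.1 hl).1
        exact Real.rpow_le_rpow_of_nonpos (by linarith)
          (Nat.cast_le.2 (Finset.mem_Icc.1 hl).2) hα

/-- integral lower bound for nonnegative exponents -/
lemma T_lower_int {α : ℝ} (hα : 0 ≤ α) (m : ℕ) :
    (m : ℝ) ^ (α + 1) / (α + 1) ≤ T α m := by
  have hmono : MonotoneOn (fun x : ℝ => x ^ α) (Set.Icc ((0:ℕ):ℝ) ((m:ℕ):ℝ)) := by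
    intro x hx y hy hxy
    exact Real.rpow_le_rpow (by simpa using hx.1) hxy hα
  have := MonotoneOn.integral_le_sum_Ico (f := fun x : ℝ => x ^ α) (Nat.zero_le m) hmono
  rw [← T_reindex] at this
  refine le_trans (le_of_eq ?_) this
  rw [Nat.cast_zero, integral_rpow (Or.inl (by linarith)),
    Real.zero_rpow (by positivity : α + 1 ≠ 0)]
  ring

/-- integral upper bound for negative exponents `≠ -1` -/
lemma T_upper_int {α : ℝ} (hα : α < 0) (hα1 : α ≠ -1) (m : ℕ) (hm : 1 ≤ m) :
    T α m ≤ 1 + ((m : ℝ) ^ (α + 1) - 1) / (α + 1) := by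
  have hanti : AntitoneOn (fun x : ℝ => x ^ α) (Set.Icc ((1:ℕ):ℝ) ((m:ℕ):ℝ)) := by
    intro x hx y hy hxy
    have : (1:ℝ) ≤ x := by exact_mod_cast hx.1
    exact Real.rpow_le_rpow_of_nonpos (by linarith) hxy hα.le
  have := AntitoneOn.sum_le_integral_Ico (f := fun x : ℝ => x ^ α) hm hanti
  rw [T_reindex' α m hm]
  have hint : (∫ x in ((1:ℕ):ℝ)..((m:ℕ):ℝ), x ^ α) = ((m : ℝ) ^ (α + 1) - 1) / (α + 1) := by
    rw [integral_rpow]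
    · rw [Nat.cast_one, Real.one_rpow]
    · refine Or.inr ⟨hα1, ?_⟩
      rw [Nat.cast_one, Set.uIcc_of_le (by exact_mod_cast hm)]
      intro h
      exact absurd h.1 (by norm_num)
  linarith [hint ▸ this]




lemma one_le_log {n : ℕ} (hn : 3 ≤ n) : 1 ≤ Real.log n := by
  have h3 : (3:ℝ) ≤ (n:ℝ) := by exact_mod_cast hn
  have : Real.exp 1 ≤ (n:ℝ) := by
    have := Real.exp_one_lt_d9
    linarith
  calc (1:ℝ) = Real.log (Real.exp 1) := (Real.log_exp 1).symm
    _ ≤ Real.log n := Real.log_le_log (Real.exp_pos 1) this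

lemma log_pos' {n : ℕ} (hn : 3 ≤ n) : 0 < Real.log n :=
  lt_of_lt_of_le one_pos (one_le_log hn)

lemma log_le_rpow {ε : ℝ} (hε : 0 < ε) {n : ℕ} (hn : 1 ≤ n) :
    Real.log n ≤ ε⁻¹ * (n:ℝ) ^ ε := by
  have hn' : (0:ℝ) < n := by exact_mod_cast hn
  have h1 : Real.log n = ε⁻¹ * Real.log ((n:ℝ) ^ ε) := by
    rw [Real.log_rpow hn']
    field_simp
  rw [h1]
  have h2 : Real.log ((n:ℝ) ^ ε) ≤ (n:ℝ) ^ ε := by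
    have := Real.log_le_sub_one_of_pos (Real.rpow_pos_of_pos hn' ε)
    linarith
  have h3 : 0 < ε⁻¹ := by positivity
  nlinarith

lemma cast_pred {n : ℕ} (hn : 2 ≤ n) : ((n - 1 : ℕ) : ℝ) = (n : ℝ) - 1 := by
  have h1 : 1 ≤ n := by omega
  push_cast [Nat.cast_sub h1]
  ring

lemma half_le_pred {n : ℕ} (hn : 2 ≤ n) : (n:ℝ)/2 ≤ ((n-1:ℕ):ℝ) := by
  rw [cast_pred hn]
  have : (2:ℝ) ≤ n := by exact_mod_cast hn
  linarith

lemma pred_le_self {n : ℕ} : ((n-1:ℕ):ℝ) ≤ (n:ℝ) := by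
  exact_mod_cast Nat.sub_le n 1

/-- `Σ_{l=1}^{n-1} l^α = Θ(n^(α+1))` for `α > -1`. -/
lemma SS_theta_rpow {α : ℝ} (hα : -1 < α) :
    ThP (fun n => T α (n - 1)) (fun n => (n:ℝ) ^ (α + 1)) := by
  have hα1 : (0:ℝ) < α + 1 := by linarith
  obtain ⟨d, hd, hlow⟩ : ∃ d : ℝ, 0 < d ∧ ∀ m : ℕ, 1 ≤ m → d * (m:ℝ)^(α+1) ≤ T α m := by
    rcases le_or_gt 0 α with h0 | h0
    · exact ⟨(α+1)⁻¹, by positivity, fun m _ => by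
        rw [inv_mul_eq_div]; exact T_lower_int h0 m⟩
    · exact ⟨1, one_pos, fun m hm => by
        rw [one_mul]; exact T_lower_pow h0.le m hm⟩
  obtain ⟨e, he, hupp⟩ : ∃ e : ℝ, 0 < e ∧ ∀ m : ℕ, 1 ≤ m → T α m ≤ e * (m:ℝ)^(α+1) := by
    rcases le_or_gt 0 α with h0 | h0
    · exact ⟨1, one_pos, fun m _ => by rw [one_mul]; exact T_upper_pow h0 m⟩
    · refine ⟨1 + (α+1)⁻¹, by positivity, fun m hm => ?_⟩
      have hm1 : (1:ℝ) ≤ (m:ℝ) := by exact_mod_cast hm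
      have hone : (1:ℝ) ≤ (m:ℝ)^(α+1) := Real.one_le_rpow hm1 hα1.le
      have h2 := T_upper_int h0 (by linarith : α ≠ -1) m hm
      have h3 : ((m:ℝ)^(α+1) - 1)/(α+1) ≤ (m:ℝ)^(α+1) * (α+1)⁻¹ := by
        rw [div_eq_mul_inv]
        have : (0:ℝ) < (α+1)⁻¹ := by positivity
        nlinarith
      nlinarith
  refine ⟨d * (2:ℝ)⁻¹ ^ (α+1), e, by positivity, he, 2, fun n hn => ?_⟩
  have hn' : (0:ℝ) < n := by positivity
  have hm : 1 ≤ n - 1 := by omega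
  have hpow : (0:ℝ) < (n:ℝ)^(α+1) := Real.rpow_pos_of_pos hn' _
  refine ⟨hpow, ?_, ?_⟩
  · have step : ((n:ℝ)/2) ^ (α+1) ≤ ((n-1:ℕ):ℝ) ^ (α+1) :=
      Real.rpow_le_rpow (by positivity) (half_le_pred hn) hα1.le
    have heq : ((n:ℝ)/2) ^ (α+1) = (2:ℝ)⁻¹ ^ (α+1) * (n:ℝ)^(α+1) := by
      rw [div_eq_mul_inv, mul_comm ((n:ℝ)) _, Real.mul_rpow (by norm_num) hn'.le]
    calc d * (2:ℝ)⁻¹^(α+1) * (n:ℝ)^(α+1) = d * ((2:ℝ)⁻¹^(α+1) * (n:ℝ)^(α+1)) := by ring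
      _ = d * ((n:ℝ)/2)^(α+1) := by rw [heq]
      _ ≤ d * ((n-1:ℕ):ℝ)^(α+1) := by nlinarith
      _ ≤ T α (n-1) := hlow (n-1) hm
  · calc T α (n-1) ≤ e * ((n-1:ℕ):ℝ)^(α+1) := hupp (n-1) hm
      _ ≤ e * (n:ℝ)^(α+1) := by
          have := Real.rpow_le_rpow (Nat.cast_nonneg (n-1)) (pred_le_self (n := n)) hα1.le
          nlinarith

/-- `Σ_{l=1}^{n-1} l^{-1} = Θ(log n)`. -/
lemma SS_theta_log : ThP (fun n => T (-1) (n - 1)) (fun n => Real.log n) := by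
  have key : ∀ n : ℕ, T (-1) n = (harmonic n : ℝ) := by
    intro n
    rw [T, harmonic_eq_sum_Icc]
    push_cast
    apply Finset.sum_congr rfl
    intro l _
    rw [Real.rpow_neg_one]
  refine ⟨1, 2, one_pos, by norm_num, 3, fun n hn => ?_⟩
  have hlog := log_pos' hn
  have h1le := one_le_log hn
  refine ⟨hlog, ?_, ?_⟩
  · show 1 * Real.log n ≤ T (-1) (n - 1)
    rw [key, one_mul]
    have := log_add_one_le_harmonic (n-1)
    rwa [show ((n-1:ℕ) + 1 : ℕ) = n from by omega] at this
  · show T (-1) (n - 1) ≤ 2 * Real.log n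
    rw [key]
    have h2 := harmonic_le_one_add_log (n-1)
    have h3 : Real.log ((n-1:ℕ):ℝ) ≤ Real.log n := by
      apply Real.log_le_log _ pred_le_self
      have : (2:ℕ) ≤ n - 1 := by omega
      exact_mod_cast lt_of_lt_of_le two_pos (by exact_mod_cast this)
    linarith

/-- `Σ_{l=1}^{n-1} l^α = Θ(1)` for `α < -1`. -/
lemma SS_theta_const {α : ℝ} (hα : α < -1) :
    ThP (fun n => T α (n - 1)) (fun _ => (1:ℝ)) := by
  have hα1 : α + 1 < 0 := by linarith
  have hneg : (0:ℝ) < -(α+1) := by linarith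
  have hinv : (0:ℝ) < (-(α+1))⁻¹ := inv_pos.2 hneg
  refine ⟨1, 1 + (-(α+1))⁻¹, one_pos, by linarith, 2, fun n hn => ?_⟩
  have hm : 1 ≤ n - 1 := by omega
  refine ⟨one_pos, ?_, ?_⟩
  · show 1 * (1:ℝ) ≤ T α (n-1)
    rw [mul_one]
    have h1 : ((1:ℕ):ℝ) ^ α ≤ T α (n-1) := by
      apply Finset.single_le_sum (f := fun l : ℕ => (l:ℝ)^α)
      · intro l _
        exact Real.rpow_nonneg (Nat.cast_nonneg l) α
      · exact Finset.mem_Icc.2 ⟨le_refl 1, hm⟩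
    rwa [Nat.cast_one, Real.one_rpow] at h1
  · show T α (n-1) ≤ (1 + (-(α+1))⁻¹) * 1
    rw [mul_one]
    have h2 := T_upper_int (by linarith : α < 0) (by linarith : α ≠ -1) (n-1) hm
    have h3 : ((n-1:ℕ):ℝ)^(α+1) - 1 ≤ 0 := by
      have hb : (1:ℝ) ≤ ((n-1:ℕ):ℝ) := by exact_mod_cast hm
      nlinarith [Real.rpow_le_one_of_one_le_of_nonpos hb hα1.le]
    have h4 : (((n-1:ℕ):ℝ)^(α+1) - 1) / (α+1) ≤ (-(α+1))⁻¹ := by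
      rw [div_le_iff_of_neg hα1]
      have h6 : (-(α+1))⁻¹ * (α+1) = -1 := by
        rw [inv_neg]
        field_simp
        rw [div_self (by linarith : α + 1 ≠ 0)]
      nlinarith [Real.rpow_nonneg (Nat.cast_nonneg (n-1)) (α+1)]
    linarith




lemma rpow_collapse3 {x : ℝ} (hx : 0 < x) (a b c d : ℝ) (h : a + b + c = d) :
    x^a * x^b * x^c = x^d := by
  rw [← Real.rpow_add hx, ← Real.rpow_add hx, h]

lemma model_pow {n : ℕ} (hn : 0 < (n:ℝ)) (a b c : ℝ) (h : 1 - a + b = c) :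
    (n:ℝ) * ((n:ℝ)^a)⁻¹ * (n:ℝ)^b = (n:ℝ)^c := by
  rw [← Real.rpow_neg hn.le]
  calc (n:ℝ) * (n:ℝ)^(-a) * (n:ℝ)^b = (n:ℝ)^(1:ℝ) * (n:ℝ)^(-a) * (n:ℝ)^b := by
        rw [Real.rpow_one]
    _ = (n:ℝ)^c := rpow_collapse3 hn 1 (-a) b c (by linarith)

lemma model_one {n : ℕ} (hn : 0 < (n:ℝ)) (b c : ℝ) (h : 1 + b = c) :
    (n:ℝ) * (1:ℝ)⁻¹ * (n:ℝ)^b = (n:ℝ)^c := by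
  rw [inv_one, mul_one]
  calc (n:ℝ) * (n:ℝ)^b = (n:ℝ)^(1:ℝ) * (n:ℝ)^b := by rw [Real.rpow_one]
    _ = (n:ℝ)^c := by rw [← Real.rpow_add hn, show (1:ℝ) + b = c from h]

lemma thP_nat : ThP (fun n => (n:ℝ)) (fun n => (n:ℝ)) :=
  thP_self 1 (fun n hn => by exact_mod_cast Nat.lt_of_lt_of_le Nat.zero_lt_one hn)

lemma thP_Q_aux {γ : ℝ} {z s : ℕ → ℝ} (hZ : ThP (Z γ) z)
    (hS : ThP (fun n => T (1 - γ) (n-1)) s) :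
    ThP (Q γ) (fun n => (n:ℝ) * (z n)⁻¹ * s n) :=
  ((thP_nat.mul hZ.inv).mul hS).congr 0 (fun n _ => rfl)

lemma thP_A_aux {γ : ℝ} {z s : ℕ → ℝ} (hZ : ThP (Z γ) z)
    (hS : ThP (fun n => T (1/2 - γ) (n-1)) s) :
    ThP (A γ) (fun n => (n:ℝ) * (z n)⁻¹ * s n) :=
  ((thP_nat.mul hZ.inv).mul hS).congr 0 (fun n _ => rfl)

lemma thP_Z_const {γ : ℝ} (h : 1 < γ) : ThP (Z γ) (fun _ => (1:ℝ)) :=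
  (SS_theta_const (show -γ < -1 by linarith)).congr 0 (fun n _ => rfl)

lemma thP_Z_log : ThP (Z 1) (fun n => Real.log n) :=
  SS_theta_log.congr 0 (fun n _ => by show Z 1 n = T (-1) (n-1); norm_num [Z, T])

lemma thP_Z_pow {γ : ℝ} (h0 : 0 ≤ γ) (h : γ < 1) : ThP (Z γ) (fun n => (n:ℝ)^(1-γ)) :=
  ((SS_theta_rpow (show (-1:ℝ) < -γ by linarith)).congr 0 (fun n _ => rfl)).congr_h 0
    (fun n _ => by rw [show -γ + 1 = 1 - γ by ring])

lemma npos {n : ℕ} (hn : 3 ≤ n) : (0:ℝ) < (n:ℝ) := by positivity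
lemma none_le {n : ℕ} (hn : 3 ≤ n) : (1:ℝ) ≤ (n:ℝ) := by exact_mod_cast le_trans (by norm_num) hn

/-! Q models -/

lemma thQ1 {γ : ℝ} (h : 2 < γ) : ThP (Q γ) (fun n => (n:ℝ)) := by
  have := thP_Q_aux (thP_Z_const (by linarith))
    (SS_theta_const (show 1 - γ < -1 by linarith))
  exact this.congr_h 3 (fun n hn => by
    simp only [inv_one, mul_one])

lemma thQ2 : ThP (Q 2) (fun n => (n:ℝ) * Real.log n) := by
  have hS : ThP (fun n => T (1 - 2) (n-1)) (fun n => Real.log n) :=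
    SS_theta_log.congr 0 (fun n _ => by norm_num)
  have := thP_Q_aux (thP_Z_const (by norm_num)) hS
  exact this.congr_h 3 (fun n hn => by simp only [inv_one, mul_one])

lemma thQ3 {γ : ℝ} (h1 : 1 < γ) (h2 : γ < 2) : ThP (Q γ) (fun n => (n:ℝ)^(3-γ)) := by
  have hS : ThP (fun n => T (1 - γ) (n-1)) (fun n => (n:ℝ)^(2-γ)) :=
    (SS_theta_rpow (show (-1:ℝ) < 1 - γ by linarith)).congr_h 0
      (fun n _ => by rw [show 1 - γ + 1 = 2 - γ by ring])
  have := thP_Q_aux (thP_Z_const h1) hS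
  exact this.congr_h 3 (fun n hn => model_one (npos hn) _ _ (by ring))

lemma thQ4 : ThP (Q 1) (fun n => (n:ℝ)^2 / Real.log n) := by
  have hS : ThP (fun n => T (1 - 1) (n-1)) (fun n => (n:ℝ)^(1:ℝ)) :=
    ((SS_theta_rpow (show (-1:ℝ) < 0 by norm_num)).congr 0
      (fun n _ => by norm_num)).congr_h 0 (fun n _ => by norm_num)
  have := thP_Q_aux thP_Z_log hS
  exact this.congr_h 3 (fun n hn => by
    rw [Real.rpow_one, div_eq_mul_inv, sq]
    ring)

lemma thQ5 {γ : ℝ} (h0 : 0 ≤ γ) (h : γ < 1) : ThP (Q γ) (fun n => (n:ℝ)^2) := by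
  have hS : ThP (fun n => T (1 - γ) (n-1)) (fun n => (n:ℝ)^(2-γ)) :=
    (SS_theta_rpow (show (-1:ℝ) < 1 - γ by linarith)).congr_h 0
      (fun n _ => by rw [show 1 - γ + 1 = 2 - γ by ring])
  have := thP_Q_aux (thP_Z_pow h0 h) hS
  exact this.congr_h 3 (fun n hn => by
    rw [model_pow (npos hn) (1-γ) (2-γ) 2 (by ring), ← Real.rpow_natCast (n:ℝ) 2]
    norm_num)

/-! A models -/

lemma thA1 {γ : ℝ} (h : 3/2 < γ) : ThP (A γ) (fun n => (n:ℝ)) := by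
  have := thP_A_aux (thP_Z_const (by linarith))
    (SS_theta_const (show 1/2 - γ < -1 by linarith))
  exact this.congr_h 3 (fun n hn => by simp only [inv_one, mul_one])

lemma thA2 : ThP (A (3/2)) (fun n => (n:ℝ) * Real.log n) := by
  have hS : ThP (fun n => T (1/2 - 3/2) (n-1)) (fun n => Real.log n) :=
    SS_theta_log.congr 0 (fun n _ => by norm_num)
  have := thP_A_aux (thP_Z_const (by norm_num)) hS
  exact this.congr_h 3 (fun n hn => by simp only [inv_one, mul_one])

lemma thA3 {γ : ℝ} (h1 : 1 < γ) (h2 : γ < 3/2) : ThP (A γ) (fun n => (n:ℝ)^(5/2-γ)) := by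
  have hS : ThP (fun n => T (1/2 - γ) (n-1)) (fun n => (n:ℝ)^(3/2-γ)) :=
    (SS_theta_rpow (show (-1:ℝ) < 1/2 - γ by linarith)).congr_h 0
      (fun n _ => by rw [show 1/2 - γ + 1 = 3/2 - γ by ring])
  have := thP_A_aux (thP_Z_const h1) hS
  exact this.congr_h 3 (fun n hn => model_one (npos hn) _ _ (by ring))

lemma thA4 : ThP (A 1) (fun n => (n:ℝ)^(3/2:ℝ) / Real.log n) := by
  have hS : ThP (fun n => T (1/2 - 1) (n-1)) (fun n => (n:ℝ)^(1/2:ℝ)) :=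
    ((SS_theta_rpow (show (-1:ℝ) < 1/2 - 1 by norm_num)).congr 0
      (fun n _ => by norm_num)).congr_h 0 (fun n _ => by norm_num)
  have := thP_A_aux thP_Z_log hS
  refine this.congr_h 3 (fun n hn => ?_)
  have hc : (n:ℝ) * (n:ℝ)^(1/2:ℝ) = (n:ℝ)^(3/2:ℝ) := by
    calc (n:ℝ) * (n:ℝ)^(1/2:ℝ) = (n:ℝ)^(1:ℝ) * (n:ℝ)^(1/2:ℝ) := by rw [Real.rpow_one]
      _ = (n:ℝ)^(3/2:ℝ) := by rw [← Real.rpow_add (npos hn)]; norm_num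
  rw [div_eq_mul_inv ((n:ℝ)^(3/2:ℝ)) (Real.log (n:ℝ)), ← hc]
  ring

lemma thA5 {γ : ℝ} (h0 : 0 ≤ γ) (h : γ < 1) : ThP (A γ) (fun n => (n:ℝ)^(3/2:ℝ)) := by
  have hS : ThP (fun n => T (1/2 - γ) (n-1)) (fun n => (n:ℝ)^(3/2-γ)) :=
    (SS_theta_rpow (show (-1:ℝ) < 1/2 - γ by linarith)).congr_h 0
      (fun n _ => by rw [show 1/2 - γ + 1 = 3/2 - γ by ring])
  have := thP_A_aux (thP_Z_pow h0 h) hS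
  exact this.congr_h 3 (fun n hn => by
    rw [model_pow (npos hn) (1-γ) (3/2-γ) (3/2) (by ring)])




lemma sqrtlog_one_le {n : ℕ} (hn : 3 ≤ n) : 1 ≤ Real.sqrt (Real.log n) := by
  calc (1:ℝ) = Real.sqrt 1 := Real.sqrt_one.symm
    _ ≤ Real.sqrt (Real.log n) := Real.sqrt_le_sqrt (one_le_log hn)

lemma sqrt_eq {n : ℕ} : Real.sqrt (n:ℝ) = (n:ℝ)^(1/2:ℝ) := Real.sqrt_eq_rpow _

lemma nsqrt {n : ℕ} (hn : 3 ≤ n) : (n:ℝ) * (n:ℝ)^(1/2:ℝ) = (n:ℝ)^(3/2:ℝ) := by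
  calc (n:ℝ) * (n:ℝ)^(1/2:ℝ) = (n:ℝ)^(1:ℝ) * (n:ℝ)^(1/2:ℝ) := by rw [Real.rpow_one]
    _ = (n:ℝ)^(3/2:ℝ) := by rw [← Real.rpow_add (npos hn)]; norm_num

lemma log_le_sqrt {n : ℕ} (hn : 3 ≤ n) : Real.log n ≤ 2 * (n:ℝ)^(1/2:ℝ) := by
  have := log_le_rpow (by norm_num : (0:ℝ) < 1/2) (show 1 ≤ n by omega)
  calc Real.log n ≤ (1/2:ℝ)⁻¹ * (n:ℝ)^(1/2:ℝ) := this
    _ = 2 * (n:ℝ)^(1/2:ℝ) := by norm_num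

lemma sq_log_le_sqrt {n : ℕ} (hn : 3 ≤ n) :
    Real.log n * Real.log n ≤ 16 * (n:ℝ)^(1/2:ℝ) := by
  have h4 := log_le_rpow (by norm_num : (0:ℝ) < 1/4) (show 1 ≤ n by omega)
  have h4' : Real.log n ≤ 4 * (n:ℝ)^(1/4:ℝ) := by
    calc Real.log n ≤ (1/4:ℝ)⁻¹ * (n:ℝ)^(1/4:ℝ) := h4
      _ = 4 * (n:ℝ)^(1/4:ℝ) := by norm_num
  have hq : (n:ℝ)^(1/4:ℝ) * (n:ℝ)^(1/4:ℝ) = (n:ℝ)^(1/2:ℝ) := by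
    rw [← Real.rpow_add (npos hn)]; norm_num
  have hpos : (0:ℝ) ≤ Real.log n := by
    have := one_le_log hn; linarith
  nlinarith [Real.rpow_pos_of_pos (npos hn) (1/4:ℝ)]

lemma g1_eq {n : ℕ} (hn : 3 ≤ n) :
    g 1 n = (n:ℝ)^(1/2:ℝ) / Real.sqrt (Real.log n) := by
  have h : g 1 n = Real.sqrt ((n:ℝ) / Real.log n) := by
    unfold g
    rw [if_neg (by norm_num), if_neg (by norm_num), if_neg (by norm_num), if_pos rfl]
  rw [h, Real.sqrt_div (Nat.cast_nonneg n), sqrt_eq]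

lemma g_pos {β : ℝ} (hβ : 0 ≤ β) {n : ℕ} (hn : 3 ≤ n) : 0 < g β n := by
  have hL := log_pos' hn
  have hn' := npos hn
  unfold g
  split_ifs with h1 h2 h3 h4
  · exact one_pos
  · exact hL
  · exact Real.rpow_pos_of_pos hn' _
  · exact Real.sqrt_pos.2 (by positivity)
  · exact Real.sqrt_pos.2 hn'

lemma thP_g {β : ℝ} (hβ : 0 ≤ β) : ThP (g β) (g β) :=
  thP_self 3 (fun n hn => g_pos hβ hn)

/-- uniform bound `g β n ≤ 2√n`. -/
lemma g_le_sqrt {β : ℝ} (hβ : 0 ≤ β) {n : ℕ} (hn : 3 ≤ n) :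
    g β n ≤ 2 * (n:ℝ)^(1/2:ℝ) := by
  have hn' := npos hn
  have h1 : (1:ℝ) ≤ (n:ℝ)^(1/2:ℝ) := Real.one_le_rpow (none_le hn) (by norm_num)
  have hL := one_le_log hn
  have hsq : Real.sqrt (n:ℝ) ≤ 2 * (n:ℝ)^(1/2:ℝ) := by
    rw [sqrt_eq]
    linarith
  unfold g
  split_ifs with c1 c2 c3 c4
  · linarith
  · exact log_le_sqrt hn
  · have : (n:ℝ)^(1 - β/2) ≤ (n:ℝ)^(1/2:ℝ) :=
      Real.rpow_le_rpow_of_exponent_le (none_le hn) (by linarith)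
    linarith
  · have hd : (n:ℝ)/Real.log n ≤ (n:ℝ) := by
      rw [div_le_iff₀ (by linarith)]
      nlinarith
    exact le_trans (Real.sqrt_le_sqrt hd) hsq
  · exact hsq

/-- for `β > 1`: `g β n * log n ≤ C √n`. -/
lemma g_log_le_sqrt {β : ℝ} (hβ : 1 < β) :
    ∃ C : ℝ, 0 < C ∧ ∀ n : ℕ, 3 ≤ n → g β n * Real.log n ≤ C * (n:ℝ)^(1/2:ℝ) := by
  rcases lt_trichotomy β 2 with hb2 | hb2 | hb2
  · have hε : (0:ℝ) < (β-1)/2 := by linarith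
    refine ⟨((β-1)/2)⁻¹, by positivity, fun n hn => ?_⟩
    have hg : g β n = (n:ℝ)^(1 - β/2) := by
      unfold g
      rw [if_neg (by linarith), if_neg (by linarith), if_pos hβ]
    rw [hg]
    have hlog := log_le_rpow hε (show 1 ≤ n by omega)
    have hp : (0:ℝ) ≤ (n:ℝ)^(1 - β/2) := (Real.rpow_pos_of_pos (npos hn) _).le
    have step1 : (n:ℝ)^(1 - β/2) * Real.log n
        ≤ (n:ℝ)^(1 - β/2) * (((β-1)/2)⁻¹ * (n:ℝ)^((β-1)/2)) :=
      mul_le_mul_of_nonneg_left hlog hp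
    have step2 : (n:ℝ)^(1 - β/2) * (n:ℝ)^((β-1)/2) = (n:ℝ)^(1/2:ℝ) := by
      rw [← Real.rpow_add (npos hn), show (1 - β/2) + (β-1)/2 = 1/2 by ring]
    calc (n:ℝ)^(1 - β/2) * Real.log n
        ≤ (n:ℝ)^(1 - β/2) * (((β-1)/2)⁻¹ * (n:ℝ)^((β-1)/2)) := step1
      _ = ((β-1)/2)⁻¹ * ((n:ℝ)^(1 - β/2) * (n:ℝ)^((β-1)/2)) := by ring
      _ = ((β-1)/2)⁻¹ * (n:ℝ)^(1/2:ℝ) := by rw [step2]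
  · subst hb2
    refine ⟨16, by norm_num, fun n hn => ?_⟩
    have hg : g 2 n = Real.log n := by
      unfold g
      rw [if_neg (by norm_num), if_pos rfl]
    rw [hg]
    exact sq_log_le_sqrt hn
  · refine ⟨2, by norm_num, fun n hn => ?_⟩
    have hg : g β n = 1 := by unfold g; rw [if_pos hb2]
    rw [hg, one_mul]
    exact log_le_sqrt hn




/-! ### small inequality helpers (n ≥ 3) -/

lemma n_le_rpow {n : ℕ} (hn : 3 ≤ n) {c : ℝ} (hc : 1 ≤ c) : (n:ℝ) ≤ (n:ℝ)^c := by
  conv_lhs => rw [← Real.rpow_one (n:ℝ)]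
  exact Real.rpow_le_rpow_of_exponent_le (none_le hn) hc

lemma rpadd {n : ℕ} (hn : 3 ≤ n) (a b c : ℝ) (h : a + b = c) :
    (n:ℝ)^a * (n:ℝ)^b = (n:ℝ)^c := by
  rw [← Real.rpow_add (npos hn), h]

lemma nmul {n : ℕ} (hn : 3 ≤ n) (b c : ℝ) (h : 1 + b = c) :
    (n:ℝ) * (n:ℝ)^b = (n:ℝ)^c := by
  calc (n:ℝ) * (n:ℝ)^b = (n:ℝ)^(1:ℝ) * (n:ℝ)^b := by rw [Real.rpow_one]
    _ = (n:ℝ)^c := rpadd hn 1 b c (by linarith)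

lemma log_le_n {n : ℕ} (hn : 3 ≤ n) : Real.log n ≤ (n:ℝ) := by
  have := log_le_rpow one_pos (show 1 ≤ n by omega)
  rwa [inv_one, one_mul, Real.rpow_one] at this

lemma sqrtlog_le {n : ℕ} (hn : 3 ≤ n) : Real.sqrt (Real.log n) ≤ (n:ℝ)^(1/2:ℝ) := by
  rw [← sqrt_eq]
  exact Real.sqrt_le_sqrt (log_le_n hn)

lemma sqrtlog_le_log {n : ℕ} (hn : 3 ≤ n) : Real.sqrt (Real.log n) ≤ Real.log n := by
  have hL := one_le_log hn
  have h := Real.sqrt_le_sqrt (show Real.log n ≤ (Real.log n)^2 by nlinarith)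
  rwa [Real.sqrt_sq (by linarith)] at h

/-- reduce `x ≤ C * (n^{3/2} / √(log n))` to `x * √(log n) ≤ C * n^{3/2}`. -/
lemma le_t1 {n : ℕ} (hn : 3 ≤ n) {x C : ℝ}
    (h : x * Real.sqrt (Real.log n) ≤ C * (n:ℝ)^(3/2:ℝ)) :
    x ≤ C * ((n:ℝ)^(3/2:ℝ) / Real.sqrt (Real.log n)) := by
  have hs : 0 < Real.sqrt (Real.log n) := Real.sqrt_pos.2 (log_pos' hn)
  rw [show C * ((n:ℝ)^(3/2:ℝ) / Real.sqrt (Real.log n))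
      = C * (n:ℝ)^(3/2:ℝ) / Real.sqrt (Real.log n) by ring, le_div_iff₀ hs]
  exact h

/-- positivity of `n^{3/2}/√log n` -/
lemma t1_pos {n : ℕ} (hn : 3 ≤ n) : 0 < (n:ℝ)^(3/2:ℝ) / Real.sqrt (Real.log n) := by
  have hs : 0 < Real.sqrt (Real.log n) := Real.sqrt_pos.2 (log_pos' hn)
  have := Real.rpow_pos_of_pos (npos hn) (3/2:ℝ)
  positivity

/-! ### g evaluation -/

lemma g_eq_gt2 {β : ℝ} (h : 2 < β) (n : ℕ) : g β n = 1 := by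
  unfold g; rw [if_pos h]

lemma g_eq_2 (n : ℕ) : g 2 n = Real.log n := by
  unfold g; rw [if_neg (by norm_num), if_pos rfl]

lemma g_eq_mid {β : ℝ} (h1 : 1 < β) (h2 : β < 2) (n : ℕ) : g β n = (n:ℝ)^(1 - β/2) := by
  unfold g; rw [if_neg (by linarith), if_neg (by linarith), if_pos h1]

lemma g_eq_lt1 {β : ℝ} (h : β < 1) (n : ℕ) : g β n = Real.sqrt n := by
  unfold g
  rw [if_neg (by linarith), if_neg (by linarith), if_neg (by linarith), if_neg (by linarith)]

/-! ### H assembly -/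

lemma thP_H_left {γ β : ℝ} {t q : ℕ → ℝ}
    (h1 : ThP (fun n => g β n * A γ n) t) (hQ : ThP (Q γ) q)
    (C : ℝ) (M : ℕ) (hb : ∀ n, M ≤ n → q n ≤ C * t n) :
    ThP (fun n => H γ β n) t :=
  (h1.add_left hQ C M hb).congr 0 (fun n _ => rfl)

lemma thP_H_right {γ β : ℝ} {t h₁ : ℕ → ℝ}
    (hQt : ThP (Q γ) t) (h1 : ThP (fun n => g β n * A γ n) h₁)
    (C : ℝ) (M : ℕ) (hb : ∀ n, M ≤ n → h₁ n ≤ C * t n) :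
    ThP (fun n => H γ β n) t :=
  (hQt.add_right h1 C M hb).congr 0 (fun n _ => rfl)

/-- transfer `ThP gA (g·a)` along a pointwise identity of the model. -/
lemma gA_model {γ β : ℝ} {a t : ℕ → ℝ} (hβ : 0 ≤ β) (hA : ThP (A γ) a)
    (he : ∀ n, 3 ≤ n → g β n * a n = t n ∧ 0 < t n) :
    ThP (fun n => g β n * A γ n) t :=
  ((thP_g hβ).mul hA).trans (thP_of_eq 3 he)

lemma thP_gA {γ β : ℝ} {a : ℕ → ℝ} (hβ : 0 ≤ β) (hA : ThP (A γ) a) :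
    ThP (fun n => g β n * A γ n) (fun n => g β n * a n) :=
  (thP_g hβ).mul hA




lemma regime_gt2 {γ β : ℝ} (hγ : 2 < γ) (hβ : 0 ≤ β) :
    (2 < β → IsBigTheta (fun n => H γ β n) (fun n => (n : ℝ))) ∧
    (β = 2 → IsBigTheta (fun n => H γ β n) (fun n => (n : ℝ) * Real.log n)) ∧
    (1 < β ∧ β < 2 → IsBigTheta (fun n => H γ β n) (fun n => (n : ℝ) ^ (2 - β / 2))) ∧
    (β = 1 → IsBigTheta (fun n => H γ β n)
      (fun n => (n : ℝ) ^ (3 / 2 : ℝ) / Real.sqrt (Real.log n))) ∧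
    (β < 1 → IsBigTheta (fun n => H γ β n) (fun n => (n : ℝ) ^ (3 / 2 : ℝ))) := by
  have hA := thA1 (show 3/2 < γ by linarith)
  have hQ := thQ1 hγ
  refine ⟨?_, ?_, ?_, ?_, ?_⟩
  · intro hb
    have h1 : ThP (fun n => g β n * A γ n) (fun n => (n:ℝ)) :=
      gA_model hβ hA (fun n hn => ⟨by rw [g_eq_gt2 hb, one_mul], npos hn⟩)
    exact (thP_H_left h1 hQ 1 3 (fun n hn => by rw [one_mul])).isBigTheta
  · intro hb; subst hb
    have h1 : ThP (fun n => g 2 n * A γ n) (fun n => (n:ℝ) * Real.log n) :=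
      gA_model hβ hA (fun n hn => ⟨by rw [g_eq_2, mul_comm],
        by have := log_pos' hn; have := npos hn; positivity⟩)
    refine (thP_H_left h1 hQ 1 3 (fun n hn => ?_)).isBigTheta
    have := one_le_log hn
    have := npos hn
    nlinarith
  · rintro ⟨hb1, hb2⟩
    have h1 : ThP (fun n => g β n * A γ n) (fun n => (n:ℝ)^(2 - β/2)) :=
      gA_model hβ hA (fun n hn => ⟨by
        rw [g_eq_mid hb1 hb2, mul_comm, nmul hn (1 - β/2) (2 - β/2) (by ring)],
        Real.rpow_pos_of_pos (npos hn) _⟩)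
    refine (thP_H_left h1 hQ 1 3 (fun n hn => ?_)).isBigTheta
    rw [one_mul]
    exact n_le_rpow hn (by linarith)
  · intro hb; subst hb
    have h1 : ThP (fun n => g 1 n * A γ n)
        (fun n => (n:ℝ)^(3/2:ℝ) / Real.sqrt (Real.log n)) :=
      gA_model hβ hA (fun n hn => ⟨by
        rw [g1_eq hn, div_mul_eq_mul_div, mul_comm ((n:ℝ)^(1/2:ℝ)) _, nsqrt hn],
        t1_pos hn⟩)
    refine (thP_H_left h1 hQ 1 3 (fun n hn => ?_)).isBigTheta
    apply le_t1 hn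
    rw [one_mul]
    calc (n:ℝ) * Real.sqrt (Real.log n) ≤ (n:ℝ) * (n:ℝ)^(1/2:ℝ) :=
        mul_le_mul_of_nonneg_left (sqrtlog_le hn) (npos hn).le
      _ = (n:ℝ)^(3/2:ℝ) := nsqrt hn
  · intro hb
    have h1 : ThP (fun n => g β n * A γ n) (fun n => (n:ℝ)^(3/2:ℝ)) :=
      gA_model hβ hA (fun n hn => ⟨by
        rw [g_eq_lt1 hb, sqrt_eq, mul_comm, nsqrt hn],
        Real.rpow_pos_of_pos (npos hn) _⟩)
    refine (thP_H_left h1 hQ 1 3 (fun n hn => ?_)).isBigTheta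
    rw [one_mul]
    exact n_le_rpow hn (by norm_num)




lemma regime_eq2 {β : ℝ} (hβ : 0 ≤ β) :
    (2 ≤ β → IsBigTheta (fun n => H 2 β n) (fun n => (n : ℝ) * Real.log n)) ∧
    (1 < β ∧ β < 2 → IsBigTheta (fun n => H 2 β n) (fun n => (n : ℝ) ^ (2 - β / 2))) ∧
    (β = 1 → IsBigTheta (fun n => H 2 β n)
      (fun n => (n : ℝ) ^ (3 / 2 : ℝ) / Real.sqrt (Real.log n))) ∧
    (β < 1 → IsBigTheta (fun n => H 2 β n) (fun n => (n : ℝ) ^ (3 / 2 : ℝ))) := by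
  have hA : ThP (A 2) (fun n => (n:ℝ)) := thA1 (by norm_num)
  have hQ := thQ2
  refine ⟨?_, ?_, ?_, ?_⟩
  · intro hb
    rcases eq_or_lt_of_le hb with hb2 | hb2
    · subst hb2
      have h1 : ThP (fun n => g 2 n * A 2 n) (fun n => (n:ℝ) * Real.log n) :=
        gA_model hβ hA (fun n hn => ⟨by rw [g_eq_2, mul_comm],
          by have := log_pos' hn; have := npos hn; positivity⟩)
      exact (thP_H_left h1 hQ 1 3 (fun n hn => by rw [one_mul])).isBigTheta
    · -- β > 2 : Q dominant
      refine (thP_H_right hQ (thP_gA hβ hA) 1 3 (fun n hn => ?_)).isBigTheta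
      rw [g_eq_gt2 hb2, one_mul, one_mul]
      have := one_le_log hn
      have := npos hn
      nlinarith
  · rintro ⟨hb1, hb2⟩
    have h1 : ThP (fun n => g β n * A 2 n) (fun n => (n:ℝ)^(2 - β/2)) :=
      gA_model hβ hA (fun n hn => ⟨by
        rw [g_eq_mid hb1 hb2, mul_comm, nmul hn (1 - β/2) (2 - β/2) (by ring)],
        Real.rpow_pos_of_pos (npos hn) _⟩)
    refine (thP_H_left h1 hQ (1 - β/2)⁻¹ 3 (fun n hn => ?_)).isBigTheta
    have hε : (0:ℝ) < 1 - β/2 := by linarith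
    have hlog := log_le_rpow hε (show 1 ≤ n by omega)
    calc (n:ℝ) * Real.log n ≤ (n:ℝ) * ((1 - β/2)⁻¹ * (n:ℝ)^(1 - β/2)) :=
        mul_le_mul_of_nonneg_left hlog (npos hn).le
      _ = (1 - β/2)⁻¹ * ((n:ℝ) * (n:ℝ)^(1 - β/2)) := by ring
      _ = (1 - β/2)⁻¹ * (n:ℝ)^(2 - β/2) := by rw [nmul hn (1 - β/2) (2 - β/2) (by ring)]
  · intro hb; subst hb
    have h1 : ThP (fun n => g 1 n * A 2 n)
        (fun n => (n:ℝ)^(3/2:ℝ) / Real.sqrt (Real.log n)) :=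
      gA_model hβ hA (fun n hn => ⟨by
        rw [g1_eq hn, div_mul_eq_mul_div, mul_comm ((n:ℝ)^(1/2:ℝ)) _, nsqrt hn],
        t1_pos hn⟩)
    refine (thP_H_left h1 hQ 16 3 (fun n hn => ?_)).isBigTheta
    apply le_t1 hn
    have hs := sqrtlog_le_log hn
    have hq := sq_log_le_sqrt hn
    have hL := one_le_log hn
    have hn' := npos hn
    have hsn : 0 ≤ Real.sqrt (Real.log n) := Real.sqrt_nonneg _
    calc (n:ℝ) * Real.log n * Real.sqrt (Real.log n)
        ≤ (n:ℝ) * Real.log n * Real.log n := by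
          rw [mul_assoc, mul_assoc]
          apply mul_le_mul_of_nonneg_left _ hn'.le
          nlinarith
      _ ≤ (n:ℝ) * (16 * (n:ℝ)^(1/2:ℝ)) := by
          rw [mul_assoc]
          exact mul_le_mul_of_nonneg_left hq hn'.le
      _ = 16 * ((n:ℝ) * (n:ℝ)^(1/2:ℝ)) := by ring
      _ = 16 * (n:ℝ)^(3/2:ℝ) := by rw [nsqrt hn]
  · intro hb
    have h1 : ThP (fun n => g β n * A 2 n) (fun n => (n:ℝ)^(3/2:ℝ)) :=
      gA_model hβ hA (fun n hn => ⟨by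
        rw [g_eq_lt1 hb, sqrt_eq, mul_comm, nsqrt hn],
        Real.rpow_pos_of_pos (npos hn) _⟩)
    refine (thP_H_left h1 hQ 2 3 (fun n hn => ?_)).isBigTheta
    have hls := log_le_sqrt hn
    have hn' := npos hn
    calc (n:ℝ) * Real.log n ≤ (n:ℝ) * (2 * (n:ℝ)^(1/2:ℝ)) :=
        mul_le_mul_of_nonneg_left hls hn'.le
      _ = 2 * ((n:ℝ) * (n:ℝ)^(1/2:ℝ)) := by ring
      _ = 2 * (n:ℝ)^(3/2:ℝ) := by rw [nsqrt hn]




lemma regime_mid {γ β : ℝ} (hγ1 : 3/2 < γ) (hγ2 : γ < 2) (hβ : 0 ≤ β) :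
    (2 * γ - 2 ≤ β → IsBigTheta (fun n => H γ β n) (fun n => (n : ℝ) ^ (3 - γ))) ∧
    (1 < β ∧ β < 2 * γ - 2 →
      IsBigTheta (fun n => H γ β n) (fun n => (n : ℝ) ^ (2 - β / 2))) ∧
    (β = 1 → IsBigTheta (fun n => H γ β n)
      (fun n => (n : ℝ) ^ (3 / 2 : ℝ) / Real.sqrt (Real.log n))) ∧
    (β < 1 → IsBigTheta (fun n => H γ β n) (fun n => (n : ℝ) ^ (3 / 2 : ℝ))) := by
  have hA : ThP (A γ) (fun n => (n:ℝ)) := thA1 hγ1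
  have hQ : ThP (Q γ) (fun n => (n:ℝ)^(3-γ)) := thQ3 (by linarith) hγ2
  refine ⟨?_, ?_, ?_, ?_⟩
  · intro hb
    -- Q dominant with target n^(3-γ)
    rcases lt_trichotomy β 2 with hb2 | hb2 | hb2
    · -- 2γ-2 ≤ β < 2, hence 1 < β
      have hb1 : 1 < β := by linarith
      refine (thP_H_right hQ (thP_gA hβ hA) 1 3 (fun n hn => ?_)).isBigTheta
      rw [g_eq_mid hb1 hb2, one_mul, mul_comm, nmul hn (1 - β/2) (2 - β/2) (by ring)]
      exact Real.rpow_le_rpow_of_exponent_le (none_le hn) (by linarith)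
    · subst hb2
      refine (thP_H_right hQ (thP_gA hβ hA) (2-γ)⁻¹ 3 (fun n hn => ?_)).isBigTheta
      rw [g_eq_2, mul_comm]
      have hε : (0:ℝ) < 2 - γ := by linarith
      have hlog := log_le_rpow hε (show 1 ≤ n by omega)
      calc (n:ℝ) * Real.log n ≤ (n:ℝ) * ((2-γ)⁻¹ * (n:ℝ)^(2-γ)) :=
          mul_le_mul_of_nonneg_left hlog (npos hn).le
        _ = (2-γ)⁻¹ * ((n:ℝ) * (n:ℝ)^(2-γ)) := by ring
        _ = (2-γ)⁻¹ * (n:ℝ)^(3-γ) := by rw [nmul hn (2-γ) (3-γ) (by ring)]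
    · refine (thP_H_right hQ (thP_gA hβ hA) 1 3 (fun n hn => ?_)).isBigTheta
      rw [g_eq_gt2 hb2, one_mul, one_mul]
      exact n_le_rpow hn (by linarith)
  · rintro ⟨hb1, hb2⟩
    have hb2' : β < 2 := by linarith
    have h1 : ThP (fun n => g β n * A γ n) (fun n => (n:ℝ)^(2 - β/2)) :=
      gA_model hβ hA (fun n hn => ⟨by
        rw [g_eq_mid hb1 hb2', mul_comm, nmul hn (1 - β/2) (2 - β/2) (by ring)],
        Real.rpow_pos_of_pos (npos hn) _⟩)
    refine (thP_H_left h1 hQ 1 3 (fun n hn => ?_)).isBigTheta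
    rw [one_mul]
    exact Real.rpow_le_rpow_of_exponent_le (none_le hn) (by linarith)
  · intro hb; subst hb
    have h1 : ThP (fun n => g 1 n * A γ n)
        (fun n => (n:ℝ)^(3/2:ℝ) / Real.sqrt (Real.log n)) :=
      gA_model hβ hA (fun n hn => ⟨by
        rw [g1_eq hn, div_mul_eq_mul_div, mul_comm ((n:ℝ)^(1/2:ℝ)) _, nsqrt hn],
        t1_pos hn⟩)
    refine (thP_H_left h1 hQ (γ - 3/2)⁻¹ 3 (fun n hn => ?_)).isBigTheta
    apply le_t1 hn
    have hε : (0:ℝ) < γ - 3/2 := by linarith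
    have hlog := log_le_rpow hε (show 1 ≤ n by omega)
    have hs := sqrtlog_le_log hn
    have hp : (0:ℝ) ≤ (n:ℝ)^(3-γ) := (Real.rpow_pos_of_pos (npos hn) _).le
    calc (n:ℝ)^(3-γ) * Real.sqrt (Real.log n) ≤ (n:ℝ)^(3-γ) * Real.log n :=
        mul_le_mul_of_nonneg_left hs hp
      _ ≤ (n:ℝ)^(3-γ) * ((γ-3/2)⁻¹ * (n:ℝ)^(γ-3/2)) := mul_le_mul_of_nonneg_left hlog hp
      _ = (γ-3/2)⁻¹ * ((n:ℝ)^(3-γ) * (n:ℝ)^(γ-3/2)) := by ring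
      _ = (γ-3/2)⁻¹ * (n:ℝ)^(3/2:ℝ) := by rw [rpadd hn (3-γ) (γ-3/2) (3/2) (by ring)]
  · intro hb
    have h1 : ThP (fun n => g β n * A γ n) (fun n => (n:ℝ)^(3/2:ℝ)) :=
      gA_model hβ hA (fun n hn => ⟨by
        rw [g_eq_lt1 hb, sqrt_eq, mul_comm, nsqrt hn],
        Real.rpow_pos_of_pos (npos hn) _⟩)
    refine (thP_H_left h1 hQ 1 3 (fun n hn => ?_)).isBigTheta
    rw [one_mul]
    exact Real.rpow_le_rpow_of_exponent_le (none_le hn) (by linarith)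

lemma regime_eq32 {β : ℝ} (hβ : 0 ≤ β) :
    (1 < β → IsBigTheta (fun n => H (3/2) β n) (fun n => (n : ℝ) ^ (3 / 2 : ℝ))) ∧
    (β = 1 → IsBigTheta (fun n => H (3/2) β n)
      (fun n => (n : ℝ) ^ (3 / 2 : ℝ) * Real.sqrt (Real.log n))) ∧
    (β < 1 → IsBigTheta (fun n => H (3/2) β n)
      (fun n => (n : ℝ) ^ (3 / 2 : ℝ) * Real.log n)) := by
  have hA : ThP (A (3/2)) (fun n => (n:ℝ) * Real.log n) := thA2
  have hQ : ThP (Q (3/2)) (fun n => (n:ℝ)^(3/2:ℝ)) :=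
    (thQ3 (by norm_num) (by norm_num)).congr_h 0 (fun n _ => by norm_num)
  refine ⟨?_, ?_, ?_⟩
  · intro hb
    obtain ⟨C, hC, hCb⟩ := g_log_le_sqrt hb
    refine (thP_H_right hQ (thP_gA hβ hA) C 3 (fun n hn => ?_)).isBigTheta
    have h1 : g β n * ((n:ℝ) * Real.log n) = (g β n * Real.log n) * (n:ℝ) := by ring
    rw [h1]
    calc (g β n * Real.log n) * (n:ℝ) ≤ (C * (n:ℝ)^(1/2:ℝ)) * (n:ℝ) :=
        mul_le_mul_of_nonneg_right (hCb n hn) (npos hn).le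
      _ = C * ((n:ℝ) * (n:ℝ)^(1/2:ℝ)) := by ring
      _ = C * (n:ℝ)^(3/2:ℝ) := by rw [nsqrt hn]
  · intro hb; subst hb
    have h1 : ThP (fun n => g 1 n * A (3/2) n)
        (fun n => (n:ℝ)^(3/2:ℝ) * Real.sqrt (Real.log n)) :=
      gA_model hβ hA (fun n hn => ?_)
    · refine (thP_H_left h1 hQ 1 3 (fun n hn => ?_)).isBigTheta
      rw [one_mul]
      have := sqrtlog_one_le hn
      nlinarith [Real.rpow_pos_of_pos (npos hn) (3/2:ℝ)]
    · have hL := log_pos' hn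
      have hsL : 0 < Real.sqrt (Real.log n) := Real.sqrt_pos.2 hL
      constructor
      · rw [g1_eq hn]
        have : (n:ℝ)^(1/2:ℝ) / Real.sqrt (Real.log n) * ((n:ℝ) * Real.log n)
            = ((n:ℝ)^(1/2:ℝ) * (n:ℝ)) * (Real.log n / Real.sqrt (Real.log n)) := by
          ring
        rw [this, Real.div_sqrt, mul_comm ((n:ℝ)^(1/2:ℝ)) _, nsqrt hn]
      · positivity
  · intro hb
    have h1 : ThP (fun n => g β n * A (3/2) n)
        (fun n => (n:ℝ)^(3/2:ℝ) * Real.log n) :=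
      gA_model hβ hA (fun n hn => ⟨by
        rw [g_eq_lt1 hb, sqrt_eq, show (n:ℝ)^(1/2:ℝ) * ((n:ℝ) * Real.log n)
          = ((n:ℝ) * (n:ℝ)^(1/2:ℝ)) * Real.log n by ring, nsqrt hn],
        by have := log_pos' hn; have := Real.rpow_pos_of_pos (npos hn) (3/2:ℝ); positivity⟩)
    refine (thP_H_left h1 hQ 1 3 (fun n hn => ?_)).isBigTheta
    rw [one_mul]
    have := one_le_log hn
    nlinarith [Real.rpow_pos_of_pos (npos hn) (3/2:ℝ)]




lemma nn2 {n : ℕ} (hn : 3 ≤ n) : (n:ℝ)^(1/2:ℝ) * (n:ℝ)^(3/2:ℝ) = (n:ℝ)^2 := by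
  rw [rpadd hn (1/2) (3/2) 2 (by norm_num), show ((2:ℝ)) = ((2:ℕ):ℝ) by norm_num,
    Real.rpow_natCast]

lemma gA_le {β : ℝ} (hβ : 0 ≤ β) {n : ℕ} (hn : 3 ≤ n) {x : ℝ} (hx : 0 ≤ x) :
    g β n * x ≤ 2 * ((n:ℝ)^(1/2:ℝ) * x) := by
  have h := g_le_sqrt hβ hn
  calc g β n * x ≤ (2 * (n:ℝ)^(1/2:ℝ)) * x := mul_le_mul_of_nonneg_right h hx
    _ = 2 * ((n:ℝ)^(1/2:ℝ) * x) := by ring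

lemma regime_low {γ β : ℝ} (hγ1 : 1 < γ) (hγ2 : γ < 3/2) (hβ : 0 ≤ β) :
    IsBigTheta (fun n => H γ β n) (fun n => (n : ℝ) ^ (3 - γ)) := by
  have hA : ThP (A γ) (fun n => (n:ℝ)^(5/2-γ)) := thA3 hγ1 hγ2
  have hQ : ThP (Q γ) (fun n => (n:ℝ)^(3-γ)) := thQ3 hγ1 (by linarith)
  refine (thP_H_right hQ (thP_gA hβ hA) 2 3 (fun n hn => ?_)).isBigTheta
  calc g β n * (n:ℝ)^(5/2-γ) ≤ 2 * ((n:ℝ)^(1/2:ℝ) * (n:ℝ)^(5/2-γ)) :=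
      gA_le hβ hn (Real.rpow_pos_of_pos (npos hn) _).le
    _ = 2 * (n:ℝ)^(3-γ) := by rw [rpadd hn (1/2) (5/2-γ) (3-γ) (by ring)]

lemma regime_eq1 {β : ℝ} (hβ : 0 ≤ β) :
    IsBigTheta (fun n => H 1 β n) (fun n => (n : ℝ) ^ 2 / Real.log n) := by
  have hA : ThP (A 1) (fun n => (n:ℝ)^(3/2:ℝ) / Real.log n) := thA4
  have hQ : ThP (Q 1) (fun n => (n:ℝ)^2 / Real.log n) := thQ4
  refine (thP_H_right hQ (thP_gA hβ hA) 2 3 (fun n hn => ?_)).isBigTheta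
  have hL := log_pos' hn
  have h1 : g β n * ((n:ℝ)^(3/2:ℝ) / Real.log n) = (g β n * (n:ℝ)^(3/2:ℝ)) / Real.log n := by
    ring
  have h2 : (2:ℝ) * ((n:ℝ)^2 / Real.log n) = (2 * (n:ℝ)^2) / Real.log n := by ring
  rw [h1, h2, div_le_div_iff_of_pos_right hL]
  calc g β n * (n:ℝ)^(3/2:ℝ) ≤ 2 * ((n:ℝ)^(1/2:ℝ) * (n:ℝ)^(3/2:ℝ)) :=
      gA_le hβ hn (Real.rpow_pos_of_pos (npos hn) _).le
    _ = 2 * (n:ℝ)^2 := by rw [nn2 hn]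

lemma regime_lt1 {γ β : ℝ} (hγ0 : 0 ≤ γ) (hγ : γ < 1) (hβ : 0 ≤ β) :
    IsBigTheta (fun n => H γ β n) (fun n => (n : ℝ) ^ 2) := by
  have hA : ThP (A γ) (fun n => (n:ℝ)^(3/2:ℝ)) := thA5 hγ0 hγ
  have hQ : ThP (Q γ) (fun n => (n:ℝ)^2) := thQ5 hγ0 hγ
  refine (thP_H_right hQ (thP_gA hβ hA) 2 3 (fun n hn => ?_)).isBigTheta
  calc g β n * (n:ℝ)^(3/2:ℝ) ≤ 2 * ((n:ℝ)^(1/2:ℝ) * (n:ℝ)^(3/2:ℝ)) :=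
      gA_le hβ hn (Real.rpow_pos_of_pos (npos hn) _).le
    _ = 2 * (n:ℝ)^2 := by rw [nn2 hn]


end SBaux

theorem social_broadcast_transport_complexity_order (γ β : ℝ) (hγ : 0 ≤ γ) (hβ : 0 ≤ β) :
    (2 < γ →
      (2 < β → IsBigTheta (fun n => H γ β n) (fun n => (n : ℝ))) ∧
      (β = 2 → IsBigTheta (fun n => H γ β n) (fun n => (n : ℝ) * Real.log n)) ∧
      (1 < β ∧ β < 2 → IsBigTheta (fun n => H γ β n) (fun n => (n : ℝ) ^ (2 - β / 2))) ∧
      (β = 1 → IsBigTheta (fun n => H γ β n)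
        (fun n => (n : ℝ) ^ (3 / 2 : ℝ) / Real.sqrt (Real.log n))) ∧
      (β < 1 → IsBigTheta (fun n => H γ β n) (fun n => (n : ℝ) ^ (3 / 2 : ℝ)))) ∧
    (γ = 2 →
      (2 ≤ β → IsBigTheta (fun n => H γ β n) (fun n => (n : ℝ) * Real.log n)) ∧
      (1 < β ∧ β < 2 → IsBigTheta (fun n => H γ β n) (fun n => (n : ℝ) ^ (2 - β / 2))) ∧
      (β = 1 → IsBigTheta (fun n => H γ β n)
        (fun n => (n : ℝ) ^ (3 / 2 : ℝ) / Real.sqrt (Real.log n))) ∧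
      (β < 1 → IsBigTheta (fun n => H γ β n) (fun n => (n : ℝ) ^ (3 / 2 : ℝ)))) ∧
    (3 / 2 < γ ∧ γ < 2 →
      (2 * γ - 2 ≤ β → IsBigTheta (fun n => H γ β n) (fun n => (n : ℝ) ^ (3 - γ))) ∧
      (1 < β ∧ β < 2 * γ - 2 →
        IsBigTheta (fun n => H γ β n) (fun n => (n : ℝ) ^ (2 - β / 2))) ∧
      (β = 1 → IsBigTheta (fun n => H γ β n)
        (fun n => (n : ℝ) ^ (3 / 2 : ℝ) / Real.sqrt (Real.log n))) ∧
      (β < 1 → IsBigTheta (fun n => H γ β n) (fun n => (n : ℝ) ^ (3 / 2 : ℝ)))) ∧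
    (γ = 3 / 2 →
      (1 < β → IsBigTheta (fun n => H γ β n) (fun n => (n : ℝ) ^ (3 / 2 : ℝ))) ∧
      (β = 1 → IsBigTheta (fun n => H γ β n)
        (fun n => (n : ℝ) ^ (3 / 2 : ℝ) * Real.sqrt (Real.log n))) ∧
      (β < 1 → IsBigTheta (fun n => H γ β n)
        (fun n => (n : ℝ) ^ (3 / 2 : ℝ) * Real.log n))) ∧
    (1 < γ ∧ γ < 3 / 2 → IsBigTheta (fun n => H γ β n) (fun n => (n : ℝ) ^ (3 - γ))) ∧
    (γ = 1 → IsBigTheta (fun n => H γ β n) (fun n => (n : ℝ) ^ 2 / Real.log n)) ∧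
    (γ < 1 → IsBigTheta (fun n => H γ β n) (fun n => (n : ℝ) ^ 2)) := by
  refine ⟨?_, ?_, ?_, ?_, ?_, ?_, ?_⟩
  · intro h
    exact SBaux.regime_gt2 h hβ
  · intro h
    subst h
    exact SBaux.regime_eq2 hβ
  · rintro ⟨h1, h2⟩
    exact SBaux.regime_mid h1 h2 hβ
  · intro h
    subst h
    exact SBaux.regime_eq32 hβ
  · rintro ⟨h1, h2⟩
    exact SBaux.regime_low h1 h2 hβ
  · intro h
    subst h
    exact SBaux.regime_eq1 hβ
  · intro h
    exact SBaux.regime_lt1 hγ h hβ
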